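/- For the factor score map η(τ_free, Λ_free, H; z) = (−H, I_k + H Λ_free)(z − (τ_free, 0)ᵀ), the difference between the scores computed at estimated parameters (τ̂, Λ̂, Ĥ) and at true parameters (τ, Λ, H) admits the exact linear representation η̂ᵢ − η̃ᵢ = B̂ᵢ (Υ̂₁ − Υ₁) with B̂ᵢ = (H, H(qᵢᵀ ⊗ I_{p−k}), −(pᵢᵀ ⊗ I_k)) for suitable vectors qᵢ, pᵢ that are affine functions of zᵢ; consequently, if Υ̂₁ − Υ₁ = O_p(N^{−1/2}), then η̂ᵢ − η̃ᵢ = O_p(N^{−1/2}). -/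

import Mathlib

open MeasureTheory Matrix Filter

/-- For the factor score map
η(τ_free, Λ_free, H; z) = (−H, I + HΛ_free)(z − (τ_free,0)ᵀ), the difference
between scores at estimated and true parameters admits the exact linear
representation
η̂ − η̃ = H (τ̂_free − τ_free) + H (Λ̂_free − Λ_free) q − (Ĥ − H) p̂,
linear in (Δτ_free, vec ΔΛ_free, vec ΔH) with coefficient matrix
B̂ = (H, H(qᵀ ⊗ I_{p−k}), −(p̂ᵀ ⊗ I_k)), where q = last k coords of z and
p̂ = (I, −Λ̂_free)(z − (τ̂_free,0)ᵀ); hence if the parameter estimates are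
O_p(N^{−1/2})-consistent, so are the factor scores. -/
theorem factor_score_linear_representation
    {Ω : Type*} [MeasurableSpace Ω] (μ : Measure Ω) [IsProbabilityMeasure μ]
    {pk k : ℕ}
    -- true parameters
    (τfree : Fin pk → ℝ) (Λfree : Matrix (Fin pk) (Fin k) ℝ)
    (H : Matrix (Fin k) (Fin pk) ℝ)
    -- estimated parameters (random, indexed by sample size N)
    (τhat : ℕ → Ω → Fin pk → ℝ)
    (Λhat : ℕ → Ω → Matrix (Fin pk) (Fin k) ℝ)
    (Hhat : ℕ → Ω → Matrix (Fin k) (Fin pk) ℝ)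
    -- observed indicator vector, split into first p−k and last k coordinates
    (z : Ω → Fin pk ⊕ Fin k → ℝ)
    -- the factor score map
    (score : (Fin pk → ℝ) → Matrix (Fin pk) (Fin k) ℝ →
      Matrix (Fin k) (Fin pk) ℝ → (Fin pk ⊕ Fin k → ℝ) → Fin k → ℝ)
    (hscore : ∀ t L Hm v, score t L Hm v =
      (Matrix.fromCols (-Hm) (1 + Hm * L)).mulVec (v - Sum.elim t 0))
    -- q = last k coordinates of z, p̂ = (I, −Λ̂)(z − (τ̂,0)ᵀ)
    (qv : Ω → Fin k → ℝ) (hq : ∀ ω i, qv ω i = z ω (Sum.inr i))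
    (phat : ℕ → Ω → Fin pk → ℝ)
    (hphat : ∀ N ω i, phat N ω i =
      (z ω (Sum.inl i) - τhat N ω i) - ((Λhat N ω).mulVec (qv ω)) i) :
    -- exact linear representation in the parameter differences
    (∀ N ω, score (τhat N ω) (Λhat N ω) (Hhat N ω) (z ω)
        - score τfree Λfree H (z ω)
      = H.mulVec (τhat N ω - τfree)
        + H.mulVec ((Λhat N ω - Λfree).mulVec (qv ω))
        - (Hhat N ω - H).mulVec (phat N ω)) ∧
    -- O_p(N^{−1/2}) propagation
    ((∀ ε > (0 : ℝ), ∃ C : ℝ, ∀ᶠ N : ℕ in atTop,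
        μ {ω | C ≤ Real.sqrt N * (‖τhat N ω - τfree‖
          + ‖(Λhat N ω - Λfree).mulVec (qv ω)‖
          + ‖(Hhat N ω - H).mulVec (phat N ω)‖)} ≤ ENNReal.ofReal ε) →
      ∀ ε > (0 : ℝ), ∃ C : ℝ, ∀ᶠ N : ℕ in atTop,
        μ {ω | C ≤ Real.sqrt N *
          ‖score (τhat N ω) (Λhat N ω) (Hhat N ω) (z ω)
            - score τfree Λfree H (z ω)‖} ≤ ENNReal.ofReal ε) := by
  have hsplit : ∀ (t : Fin pk → ℝ) (ω : Ω), z ω - Sum.elim t 0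
      = Sum.elim ((fun i => z ω (Sum.inl i)) - t) (qv ω) := by
    intro t ω; funext x
    cases x with
    | inl i => simp
    | inr i => simp [hq ω i]
  have hp : ∀ N ω, phat N ω
      = ((fun i => z ω (Sum.inl i)) - τhat N ω) - (Λhat N ω).mulVec (qv ω) := by
    intro N ω; funext i; simp [hphat N ω i]
  have hlin : ∀ N ω, score (τhat N ω) (Λhat N ω) (Hhat N ω) (z ω)
        - score τfree Λfree H (z ω)
      = H.mulVec (τhat N ω - τfree)
        + H.mulVec ((Λhat N ω - Λfree).mulVec (qv ω))
        - (Hhat N ω - H).mulVec (phat N ω) := by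
    intro N ω
    rw [hscore, hscore, hsplit, hsplit, hp,
      Matrix.fromCols_mulVec_sumElim, Matrix.fromCols_mulVec_sumElim]
    simp only [Matrix.neg_mulVec, Matrix.add_mulVec, Matrix.sub_mulVec, Matrix.mulVec_sub,
      Matrix.one_mulVec, ← Matrix.mulVec_mulVec]
    abel
  refine ⟨hlin, ?_⟩
  intro h ε hε
  set f : (Fin pk → ℝ) →L[ℝ] (Fin k → ℝ) := LinearMap.toContinuousLinearMap H.mulVecLin
  set K : ℝ := max ‖f‖ 1 with hKdef
  have hK1 : (1 : ℝ) ≤ K := le_max_right _ _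
  have hK0 : (0 : ℝ) < K := lt_of_lt_of_le one_pos hK1
  have hfK : ‖f‖ ≤ K := le_max_left _ _
  have hbound : ∀ N ω,
      ‖score (τhat N ω) (Λhat N ω) (Hhat N ω) (z ω) - score τfree Λfree H (z ω)‖
      ≤ K * (‖τhat N ω - τfree‖ + ‖(Λhat N ω - Λfree).mulVec (qv ω)‖
          + ‖(Hhat N ω - H).mulVec (phat N ω)‖) := by
    intro N ω
    rw [hlin N ω]
    have h1 : ‖H.mulVec (τhat N ω - τfree)‖ ≤ K * ‖τhat N ω - τfree‖ := by
      have := f.le_opNorm (τhat N ω - τfree)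
      simpa [f] using this.trans (mul_le_mul_of_nonneg_right hfK (norm_nonneg _))
    have h2 : ‖H.mulVec ((Λhat N ω - Λfree).mulVec (qv ω))‖
        ≤ K * ‖(Λhat N ω - Λfree).mulVec (qv ω)‖ := by
      have := f.le_opNorm ((Λhat N ω - Λfree).mulVec (qv ω))
      simpa [f] using this.trans (mul_le_mul_of_nonneg_right hfK (norm_nonneg _))
    have h3 : ‖(Hhat N ω - H).mulVec (phat N ω)‖
        ≤ K * ‖(Hhat N ω - H).mulVec (phat N ω)‖ :=
      le_mul_of_one_le_left (norm_nonneg _) hK1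
    calc ‖H.mulVec (τhat N ω - τfree) + H.mulVec ((Λhat N ω - Λfree).mulVec (qv ω))
          - (Hhat N ω - H).mulVec (phat N ω)‖
        ≤ ‖H.mulVec (τhat N ω - τfree)‖ + ‖H.mulVec ((Λhat N ω - Λfree).mulVec (qv ω))‖
          + ‖(Hhat N ω - H).mulVec (phat N ω)‖ :=
          (norm_sub_le _ _).trans (by gcongr; exact norm_add_le _ _)
      _ ≤ K * ‖τhat N ω - τfree‖ + K * ‖(Λhat N ω - Λfree).mulVec (qv ω)‖
          + K * ‖(Hhat N ω - H).mulVec (phat N ω)‖ := by gcongr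
      _ = K * (‖τhat N ω - τfree‖ + ‖(Λhat N ω - Λfree).mulVec (qv ω)‖
          + ‖(Hhat N ω - H).mulVec (phat N ω)‖) := by ring
  obtain ⟨C, hC⟩ := h ε hε
  refine ⟨K * C, ?_⟩
  filter_upwards [hC] with N hN
  refine le_trans (μ.mono ?_) hN
  intro ω hω
  simp only [Set.mem_setOf_eq] at hω ⊢
  have h2 : K * C ≤ K * (Real.sqrt N * (‖τhat N ω - τfree‖
      + ‖(Λhat N ω - Λfree).mulVec (qv ω)‖
      + ‖(Hhat N ω - H).mulVec (phat N ω)‖)) := by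
    calc K * C ≤ Real.sqrt N *
          ‖score (τhat N ω) (Λhat N ω) (Hhat N ω) (z ω) - score τfree Λfree H (z ω)‖ := hω
      _ ≤ Real.sqrt N * (K * (‖τhat N ω - τfree‖ + ‖(Λhat N ω - Λfree).mulVec (qv ω)‖
          + ‖(Hhat N ω - H).mulVec (phat N ω)‖)) :=
          mul_le_mul_of_nonneg_left (hbound N ω) (Real.sqrt_nonneg _)
      _ = K * (Real.sqrt N * (‖τhat N ω - τfree‖ + ‖(Λhat N ω - Λfree).mulVec (qv ω)‖
          + ‖(Hhat N ω - H).mulVec (phat N ω)‖)) := by ring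
  exact le_of_mul_le_mul_left h2 hK0
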